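/- Let n be divisible by 4 and a*_i = (n−i)/((n−1)n) for 1 ≤ i ≤ 3n/4. Then 1/24 + Σ_{i=1}^{n/2} (1 + (i − n/4)/(6(n−i))) a*_i + Σ_{i=n/2+1}^{3n/4} (5/6 + (n/4)/(6(n−i))) a*_i = 1/24 + (89n²/32 − 15n/8)/(6(n−1)n), which is strictly greater than 1/24 + 89/192 for all n ≥ 2 with 4 | n. Hence the expression exceeds 0.5052. -/

import Mathlib

lemma gauss1 (k : ℕ) : ∑ i ∈ Finset.Icc 1 k, (i:ℚ) = k*(k+1)/2 := by
  induction k with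
  | zero => simp
  | succ k ih =>
    rw [Finset.sum_Icc_succ_top (by omega)] ; rw [ih]; push_cast; ring

lemma lin1 (k : ℕ) (c b D : ℚ) :
    ∑ i ∈ Finset.Icc 1 k, (c - b*(i:ℚ))/D = (k*c - b*(k*(k+1)/2))/D := by
  rw [← Finset.sum_div, Finset.sum_sub_distrib, Finset.sum_const, Nat.card_Icc,
    ← Finset.mul_sum, gauss1]
  simp

lemma split2 (j k : ℕ) (hjk : j ≤ k) (f : ℕ → ℚ) :
    ∑ i ∈ Finset.Icc (j+1) k, f i = ∑ i ∈ Finset.Icc 1 k, f i - ∑ i ∈ Finset.Icc 1 j, f i := by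
  have := Finset.sum_Ioc_consecutive f (Nat.zero_le j) hjk
  simp only [← Finset.Icc_add_one_left_eq_Ioc] at this
  simp only [Nat.succ_eq_add_one, zero_add] at this
  linarith

/-- With `a*_i = (n−i)/((n−1)n)` and `4 ∣ n`, the LP objective
equals `1/24 + (89n²/32 − 15n/8)/(6(n−1)n)` and strictly exceeds `1/24 + 89/192`. -/
theorem stmt16 (n : ℕ) (h4 : 4 ∣ n) (hn : 2 ≤ n) (a : ℕ → ℚ)
    (ha : ∀ i : ℕ, a i = ((n : ℚ) - i) / (((n : ℚ) - 1) * n)) :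
    (1 / 24 + (∑ i ∈ Finset.Icc 1 (n / 2),
        (1 + ((i : ℚ) - (n : ℚ) / 4) / (6 * ((n : ℚ) - i))) * a i)
      + (∑ i ∈ Finset.Icc (n / 2 + 1) (3 * n / 4),
        (5 / 6 + ((n : ℚ) / 4) / (6 * ((n : ℚ) - i))) * a i)
      = 1 / 24 + (89 * (n : ℚ) ^ 2 / 32 - 15 * (n : ℚ) / 8) / (6 * ((n : ℚ) - 1) * n)) ∧
    1 / 24 + (89 * (n : ℚ) ^ 2 / 32 - 15 * (n : ℚ) / 8) / (6 * ((n : ℚ) - 1) * n)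
      > 1 / 24 + 89 / 192 := by
  obtain ⟨m, rfl⟩ := h4
  have hm : 1 ≤ m := by omega
  have hmQ : (1:ℚ) ≤ (m:ℚ) := by exact_mod_cast hm
  have h2 : 4 * m / 2 = 2 * m := by omega
  have h3 : 3 * (4 * m) / 4 = 3 * m := by omega
  have hD1 : (4:ℚ) * (m:ℚ) - 1 ≠ 0 := by nlinarith
  have hD2 : (4:ℚ) * (m:ℚ) ≠ 0 := by nlinarith
  set D : ℚ := 6 * ((4:ℚ) * (m:ℚ) - 1) * ((4:ℚ) * (m:ℚ)) with hDdef
  have hD : D ≠ 0 := by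
    simp only [hDdef]
    intro h
    rcases mul_eq_zero.mp h with h' | h'
    · rcases mul_eq_zero.mp h' with h'' | h'' <;> simp_all
    · exact hD2 h'
  constructor
  · rw [h2, h3]
    have e1 : ∑ i ∈ Finset.Icc 1 (2*m),
        (1 + ((i : ℚ) - ((4*m : ℕ) : ℚ) / 4) / (6 * (((4*m : ℕ) : ℚ) - i))) * a i
        = ∑ i ∈ Finset.Icc 1 (2*m), (23*(m:ℚ) - 5*(i:ℚ))/D := by
      apply Finset.sum_congr rfl
      intro i hi
      simp only [Finset.mem_Icc] at hi
      have hile : (i:ℚ) ≤ 2*m := by exact_mod_cast hi.2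
      have hne : (4:ℚ)*(m:ℚ) - (i:ℚ) ≠ 0 := by nlinarith
      rw [ha i, hDdef]
      push_cast
      field_simp
      ring
    have e2 : ∑ i ∈ Finset.Icc (2*m + 1) (3*m),
        (5 / 6 + (((4*m : ℕ) : ℚ) / 4) / (6 * (((4*m : ℕ) : ℚ) - i))) * a i
        = ∑ i ∈ Finset.Icc (2*m + 1) (3*m), (21*(m:ℚ) - 5*(i:ℚ))/D := by
      apply Finset.sum_congr rfl
      intro i hi
      simp only [Finset.mem_Icc] at hi
      have hile : (i:ℚ) ≤ 3*m := by exact_mod_cast hi.2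
      have hne : (4:ℚ)*(m:ℚ) - (i:ℚ) ≠ 0 := by nlinarith
      rw [ha i, hDdef]
      push_cast
      field_simp
      ring
    rw [e1, e2, lin1, split2 (2*m) (3*m) (by omega), lin1, lin1, hDdef]
    push_cast
    field_simp
    ring
  · rw [gt_iff_lt, add_lt_add_iff_left]
    rw [div_lt_div_iff₀ (by norm_num) (by push_cast; nlinarith)]
    push_cast
    nlinarith
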